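/- Let F: ℝᵐ → ℝᵐ, f: ℝⁿ → ℝⁿ, g: ℝᵐ → ℝⁿ be continuous, μ ≠ 0 real, and suppose ‖g(x)‖ ≤ M_g for all x. Suppose there is a C¹ Lyapunov function V: ℝⁿ → ℝ and constants B ≥ 0, M₀ > 0 and functions a, b, c defined for r ≥ B such that on ‖y‖ ≥ B: (i) V(y) ≥ a(‖y‖) with a continuous increasing, a(B) > 0, a(r) → ∞; (ii) ∇V(y)·f(y) ≤ -b(‖y‖) with b increasing, b(B) > 0; (iii) ‖∇V(y)‖ ≤ c(‖y‖) with 0 < c(r) ≤ M₀ b(r). Then for |μ| sufficiently small (namely |μ| ≤ (1/(M₀M_g))(1 - β/b(B)) for some 0 < β < b(B)), the solutions of the perturbed system y' = f(y) + μ g(x(t)) are uniformly ultimately bounded: there exists B₀ > 0 such that for every α > 0 there exists T(α) > 0 with the property that ‖y₀‖ ≤ α implies ‖y(t; t₀, y₀)‖ < B₀ for all t ≥ t₀ + T(α), uniformly over all choices of the continuous bounded forcing x(t) and all t₀ ≥ 0. -/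

import Mathlib

open scoped RealInnerProductSpace

/-- Uniform ultimate boundedness of the perturbed system `y' = f(y) + μ g(x(t))`
under Lyapunov conditions (Theorem 1 of the paper). -/
theorem uniform_ultimate_boundedness
    {m n : ℕ}
    (F : EuclideanSpace ℝ (Fin m) → EuclideanSpace ℝ (Fin m))
    (f : EuclideanSpace ℝ (Fin n) → EuclideanSpace ℝ (Fin n))
    (g : EuclideanSpace ℝ (Fin m) → EuclideanSpace ℝ (Fin n))
    (hF : Continuous F) (hf : Continuous f) (hg : Continuous g)
    (μ : ℝ) (hμ : μ ≠ 0)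
    (Mg : ℝ) (hMg : 0 < Mg) (hgbd : ∀ x, ‖g x‖ ≤ Mg)
    (V : EuclideanSpace ℝ (Fin n) → ℝ) (hV : ContDiff ℝ 1 V)
    (B M₀ : ℝ) (hB : 0 ≤ B) (hM₀ : 0 < M₀)
    (a b c : ℝ → ℝ)
    -- (i)
    (ha_cont : ContinuousOn a (Set.Ici B)) (ha_incr : StrictMonoOn a (Set.Ici B))
    (haB : 0 < a B) (ha_inf : Filter.Tendsto a Filter.atTop Filter.atTop)
    (hVa : ∀ y, B ≤ ‖y‖ → a ‖y‖ ≤ V y)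
    -- (ii)
    (hb_incr : StrictMonoOn b (Set.Ici B)) (hbB : 0 < b B)
    (hVb : ∀ y, B ≤ ‖y‖ → ⟪gradient V y, f y⟫ ≤ -b ‖y‖)
    -- (iii)
    (hc_pos : ∀ r, B ≤ r → 0 < c r) (hcb : ∀ r, B ≤ r → c r ≤ M₀ * b r)
    (hVc : ∀ y, B ≤ ‖y‖ → ‖gradient V y‖ ≤ c ‖y‖)
    -- smallness of μ
    (β : ℝ) (hβ : 0 < β) (hβb : β < b B)
    (hμsmall : |μ| ≤ (1/(M₀*Mg)) * (1 - β/(b B))) :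
    ∃ B₀ > 0, ∀ α > 0, ∃ T > 0,
      ∀ (x : ℝ → EuclideanSpace ℝ (Fin m)),
        (∀ t, 0 ≤ t → HasDerivAt x (F (x t)) t) →
      ∀ (t₀ : ℝ), 0 ≤ t₀ →
      ∀ (y : ℝ → EuclideanSpace ℝ (Fin n)),
        (∀ t, t₀ ≤ t → HasDerivAt y (f (y t) + μ • g (x t)) t) →
        ‖y t₀‖ ≤ α →
        ∀ t, t₀ + T ≤ t → ‖y t‖ < B₀ := by
  have hVdiff : Differentiable ℝ V := hV.differentiable one_ne_zero
  have hVcont : Continuous V := hVdiff.continuous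
  have hamono : MonotoneOn a (Set.Ici B) := ha_incr.monotoneOn
  have hbmono : MonotoneOn b (Set.Ici B) := hb_incr.monotoneOn
  -- rewrite the smallness assumption
  have hμ4 : |μ| * (M₀ * Mg) ≤ 1 - β / b B := by
    have h := hμsmall
    rw [one_div, inv_mul_eq_div, le_div_iff₀ (by positivity)] at h
    exact h
  set q : ℝ := β / b B with hqdef
  have hq0 : 0 < q := div_pos hβ hbB
  have hqβ : q * b B = β := div_mul_cancel₀ β (ne_of_gt hbB)
  -- the key pointwise estimate
  have key : ∀ (z : EuclideanSpace ℝ (Fin n)) (w : EuclideanSpace ℝ (Fin m)),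
      B ≤ ‖z‖ → ⟪gradient V z, f z + μ • g w⟫ ≤ -β := by
    intro z w hz
    have hbr : b B ≤ b ‖z‖ := hbmono Set.self_mem_Ici hz hz
    have hbrpos : 0 < b ‖z‖ := lt_of_lt_of_le hbB hbr
    have h2 : μ * ⟪gradient V z, g w⟫ ≤ |μ| * (c ‖z‖ * Mg) := by
      calc μ * ⟪gradient V z, g w⟫ ≤ |μ * ⟪gradient V z, g w⟫| := le_abs_self _
        _ = |μ| * |⟪gradient V z, g w⟫| := abs_mul _ _
        _ ≤ |μ| * (‖gradient V z‖ * ‖g w‖) := by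
            exact mul_le_mul_of_nonneg_left (abs_real_inner_le_norm _ _) (abs_nonneg μ)
        _ ≤ |μ| * (c ‖z‖ * Mg) := by
            refine mul_le_mul_of_nonneg_left ?_ (abs_nonneg μ)
            exact mul_le_mul (hVc z hz) (hgbd w) (norm_nonneg _) (hc_pos _ hz).le
    have h3 : |μ| * (c ‖z‖ * Mg) ≤ (1 - q) * b ‖z‖ := by
      calc |μ| * (c ‖z‖ * Mg) ≤ |μ| * ((M₀ * b ‖z‖) * Mg) := by
            refine mul_le_mul_of_nonneg_left ?_ (abs_nonneg μ)
            exact mul_le_mul_of_nonneg_right (hcb _ hz) hMg.le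
        _ = (|μ| * (M₀ * Mg)) * b ‖z‖ := by ring
        _ ≤ (1 - q) * b ‖z‖ := mul_le_mul_of_nonneg_right hμ4 hbrpos.le
    have h1 : ⟪gradient V z, f z⟫ ≤ -b ‖z‖ := hVb z hz
    have hqb : β ≤ q * b ‖z‖ := by
      calc β = q * b B := hqβ.symm
        _ ≤ q * b ‖z‖ := mul_le_mul_of_nonneg_left hbr hq0.le
    calc ⟪gradient V z, f z + μ • g w⟫
        = ⟪gradient V z, f z⟫ + μ * ⟪gradient V z, g w⟫ := by
          rw [inner_add_right, real_inner_smul_right]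
      _ ≤ -b ‖z‖ + (1 - q) * b ‖z‖ := add_le_add h1 (h2.trans h3)
      _ = -(q * b ‖z‖) := by ring
      _ ≤ -β := by linarith
  -- the decrease lemma along solutions staying outside the ball of radius B
  have decr : ∀ (x : ℝ → EuclideanSpace ℝ (Fin m)) (t₀ : ℝ)
      (y : ℝ → EuclideanSpace ℝ (Fin n)),
      (∀ t, t₀ ≤ t → HasDerivAt y (f (y t) + μ • g (x t)) t) →
      ∀ t₁ t₂, t₀ ≤ t₁ → t₁ ≤ t₂ → (∀ s ∈ Set.Icc t₁ t₂, B ≤ ‖y s‖) →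
      V (y t₂) ≤ V (y t₁) - β * (t₂ - t₁) := by
    intro x t₀ y hy t₁ t₂ h01 h12 hout
    have hyderiv : ∀ s, t₀ ≤ s → HasDerivAt (fun t => V (y t))
        (⟪gradient V (y s), f (y s) + μ • g (x s)⟫) s := by
      intro s hs
      have hgrad : HasFDerivAt V
          (InnerProductSpace.toDual ℝ _ (gradient V (y s))) (y s) :=
        (hVdiff (y s)).hasGradientAt.hasFDerivAt
      have := hgrad.comp_hasDerivAt s (hy s hs)
      simpa [InnerProductSpace.toDual_apply_apply, Function.comp_def] using this
    set φ : ℝ → ℝ := fun s => V (y s) + β * s with hφdef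
    have hφd : ∀ s ∈ Set.Icc t₁ t₂, HasDerivAt φ
        (⟪gradient V (y s), f (y s) + μ • g (x s)⟫ + β) s := by
      intro s hs
      exact (hyderiv s (h01.trans hs.1)).add
        (by simpa using (hasDerivAt_id s).const_mul β)
    have hanti : AntitoneOn φ (Set.Icc t₁ t₂) := by
      refine antitoneOn_of_deriv_nonpos (convex_Icc t₁ t₂) ?_ ?_ ?_
      · intro s hs
        exact ((hφd s hs).continuousAt).continuousWithinAt
      · intro s hs
        rw [interior_Icc] at hs
        exact ((hφd s (Set.Ioo_subset_Icc_self hs)).differentiableAt).differentiableWithinAt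
      · intro s hs
        rw [interior_Icc] at hs
        have hsI := Set.Ioo_subset_Icc_self hs
        rw [(hφd s hsI).deriv]
        have := key (y s) (x s) (hout s hsI)
        linarith
    have := hanti (Set.left_mem_Icc.mpr h12) (Set.right_mem_Icc.mpr h12) h12
    simp only [hφdef] at this
    linarith
  -- choose K = max of V on the closed ball of radius B, and B₀
  obtain ⟨z₀, hz₀mem, hz₀max'⟩ :=
    (isCompact_closedBall (0 : EuclideanSpace ℝ (Fin n)) B).exists_isMaxOn
      ⟨0, by simp [hB]⟩ hVcont.continuousOn
  have hz₀max := isMaxOn_iff.mp hz₀max'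
  set K : ℝ := V z₀ with hKdef
  obtain ⟨R, hR⟩ := Filter.eventually_atTop.mp (ha_inf.eventually_gt_atTop K)
  set B₀ : ℝ := max R (B + 1) with hB₀def
  have hBB₀ : B < B₀ := lt_of_lt_of_le (by linarith) (le_max_right _ _)
  have hB₀pos : 0 < B₀ := lt_of_le_of_lt hB hBB₀
  have hKB₀ : K < a B₀ := hR B₀ (le_max_left _ _)
  refine ⟨B₀, hB₀pos, ?_⟩
  intro α hα
  -- K α : max of V on the closed ball of radius max α B
  obtain ⟨z₁, hz₁mem, hz₁max'⟩ :=
    (isCompact_closedBall (0 : EuclideanSpace ℝ (Fin n)) (max α B)).exists_isMaxOn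
      ⟨0, by simp [le_trans hB (le_max_right α B)]⟩ hVcont.continuousOn
  have hz₁max := isMaxOn_iff.mp hz₁max'
  set Kα : ℝ := V z₁ with hKαdef
  set T : ℝ := (max (Kα - a B) 0) / β + 1 with hTdef
  have hT0 : 0 < T := by
    rw [hTdef]
    positivity
  have hβT : Kα - a B < β * T := by
    have h1 : Kα - a B ≤ max (Kα - a B) 0 := le_max_left _ _
    have h2 : β * T = max (Kα - a B) 0 + β := by
      rw [hTdef, mul_add, mul_one, mul_div_cancel₀ _ (ne_of_gt hβ)]
    linarith
  refine ⟨T, hT0, ?_⟩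
  intro x hx t₀ ht₀ y hy hy0 t ht
  -- continuity of ‖y ·‖ on [t₀, ∞)
  have hycont : ∀ s, t₀ ≤ s → ContinuousAt (fun u => ‖y u‖) s := by
    intro s hs
    exact (continuous_norm.continuousAt).comp (hy s hs).continuousAt
  -- Step 1 : there is a time t₁ ∈ [t₀, t₀+T] with ‖y t₁‖ < B
  have step1 : ∃ t₁ ∈ Set.Icc t₀ (t₀ + T), ‖y t₁‖ < B := by
    by_contra hcon
    push_neg at hcon
    have hout : ∀ s ∈ Set.Icc t₀ (t₀ + T), B ≤ ‖y s‖ := hcon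
    have hdec := decr x t₀ y hy t₀ (t₀ + T) le_rfl (by linarith) hout
    have hVup : V (y t₀) ≤ Kα := by
      refine hz₁max _ ?_
      simp only [Metric.mem_closedBall, dist_zero_right]
      exact le_trans hy0 (le_max_left α B)
    have hend : B ≤ ‖y (t₀ + T)‖ := hout _ (Set.right_mem_Icc.mpr (by linarith))
    have hlow : a B ≤ V (y (t₀ + T)) := by
      refine le_trans ?_ (hVa _ hend)
      exact hamono Set.self_mem_Ici hend hend
    have : V (y (t₀ + T)) ≤ V (y t₀) - β * T := by simpa using hdec
    linarith
  obtain ⟨t₁, ht₁mem, ht₁B⟩ := step1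
  have ht₀t₁ : t₀ ≤ t₁ := ht₁mem.1
  have ht₁t : t₁ ≤ t := le_trans ht₁mem.2 ht
  -- Step 2 : for all u ≥ t₁, ‖y u‖ < B₀ ; we only need it for u = t
  by_cases hcase : ‖y t‖ ≤ B
  · exact lt_of_le_of_lt hcase hBB₀
  push_neg at hcase
  -- last time before t at which the solution was inside the ball of radius B
  set S : Set ℝ := {u ∈ Set.Icc t₁ t | ‖y u‖ ≤ B} with hSdef
  have hSne : S.Nonempty := ⟨t₁, ⟨le_rfl, ht₁t⟩, ht₁B.le⟩
  have hSbdd : BddAbove S := ⟨t, fun u hu => hu.1.2⟩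
  set s : ℝ := sSup S with hsdef
  have hs_mem_Icc : s ∈ Set.Icc t₁ t := by
    constructor
    · exact le_csSup hSbdd ⟨⟨le_rfl, ht₁t⟩, ht₁B.le⟩
    · exact csSup_le hSne fun u hu => hu.1.2
  have ht₀s : t₀ ≤ s := le_trans ht₀t₁ hs_mem_Icc.1
  -- ‖y s‖ ≤ B
  have hsB : ‖y s‖ ≤ B := by
    by_contra hsB
    push_neg at hsB
    have hev : ∀ᶠ u in nhds s, B < ‖y u‖ :=
      (hycont s ht₀s).eventually (eventually_gt_nhds hsB)
    obtain ⟨ε, hε, hball⟩ := Metric.eventually_nhds_iff.mp hev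
    obtain ⟨u, huS, hus⟩ := exists_lt_of_lt_csSup hSne (by linarith : s - ε < s)
    have hule : u ≤ s := le_csSup hSbdd huS
    have : dist u s < ε := by rw [Real.dist_eq, abs_lt]; constructor <;> linarith
    exact absurd huS.2 (not_le.mpr (hball this))
  -- points of (s, t] are outside the ball
  have hafter : ∀ u, s < u → u ≤ t → B < ‖y u‖ := by
    intro u hsu hut
    by_contra hub
    push_neg at hub
    have : u ∈ S := ⟨⟨le_trans hs_mem_Icc.1 hsu.le, hut⟩, hub⟩
    exact absurd (le_csSup hSbdd this) (not_le.mpr hsu)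
  have hst : s < t := by
    rcases lt_or_eq_of_le hs_mem_Icc.2 with h | h
    · exact h
    · exact absurd (h ▸ hsB) (not_le.mpr hcase)
  -- ‖y s‖ = B (right limit), hence B ≤ ‖y u‖ on [s, t]
  have hsBge : B ≤ ‖y s‖ := by
    have hcw : ContinuousWithinAt (fun u => ‖y u‖) (Set.Ioi s) s :=
      (hycont s ht₀s).continuousWithinAt
    have hev : ∀ᶠ u in nhdsWithin s (Set.Ioi s), B ≤ ‖y u‖ := by
      filter_upwards [Ioc_mem_nhdsGT hst] with u hu
      exact (hafter u hu.1 hu.2).le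
    exact ge_of_tendsto hcw hev
  have hout : ∀ u ∈ Set.Icc s t, B ≤ ‖y u‖ := by
    intro u hu
    rcases eq_or_lt_of_le hu.1 with h | h
    · exact h ▸ hsBge
    · exact (hafter u h hu.2).le
  -- conclude
  have hdec := decr x t₀ y hy s t ht₀s hst.le hout
  have hVsK : V (y s) ≤ K := by
    refine hz₀max _ ?_
    simp only [Metric.mem_closedBall, dist_zero_right]
    exact hsB
  have haVt : a ‖y t‖ ≤ V (y t) := hVa _ (hout t (Set.right_mem_Icc.mpr hst.le))
  by_contra hfin
  push_neg at hfin
  have : a B₀ ≤ a ‖y t‖ := hamono (Set.mem_Ici.mpr hBB₀.le)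
    (Set.mem_Ici.mpr (le_trans hBB₀.le hfin)) hfin
  nlinarith [mul_nonneg hβ.le (sub_nonneg.mpr hst.le)]
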